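/- Let A be a commutative noetherian ring. There is a bijection between the set of isomorphism classes of indecomposable injective A-modules and Spec(A), sending 𝔭 to the injective hull E(A/𝔭); moreover every injective A-module is a direct sum of modules of the form E(A/𝔭). -/

import Mathlib

universe u

open DirectSum

section aux
variable {A : Type u} [CommRing A]



lemma myInj.of_equiv {Q Q' : Type u} [AddCommGroup Q] [Module A Q]
    [AddCommGroup Q'] [Module A Q'] (e : Q ≃ₗ[A] Q') (h : Module.Injective A Q) :
    Module.Injective A Q' where
  out X Y _ _ _ _ f hf g := by
    obtain ⟨h', hh⟩ := h.out f hf (e.symm.toLinearMap ∘ₗ g)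
    exact ⟨e.toLinearMap ∘ₗ h', fun x => by simp [hh x]⟩

lemma myInj.exists_isCompl_range {Q M : Type u} [AddCommGroup Q] [Module A Q]
    [AddCommGroup M] [Module A M] (hQ : Module.Injective A Q)
    (g : Q →ₗ[A] M) (hg : Function.Injective g) :
    ∃ N', IsCompl (LinearMap.range g) N' := by
  haveI := hQ
  obtain ⟨r, hr⟩ := Module.Injective.extension_property A Q Q M g hg LinearMap.id
  have hrq : ∀ q : Q, r (g q) = q := fun q => LinearMap.congr_fun hr q
  refine ⟨LinearMap.ker (g ∘ₗ r), ⟨?_, ?_⟩⟩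
  · rw [Submodule.disjoint_def]
    rintro x ⟨q, rfl⟩ hx
    simp only [LinearMap.mem_ker, LinearMap.comp_apply, hrq] at hx
    exact hx
  · rw [codisjoint_iff, eq_top_iff]
    intro m _
    refine Submodule.mem_sup.mpr ⟨g (r m), ⟨r m, rfl⟩, m - g (r m), ?_, by abel⟩
    simp [hrq]

lemma myInj.of_isCompl {M : Type u} [AddCommGroup M] [Module A M]
    (hM : Module.Injective A M) (N N' : Submodule A M) (hc : IsCompl N N') :
    Module.Injective A N where
  out X Y _ _ _ _ f hf g := by
    haveI := hM
    obtain ⟨h, hh⟩ := Module.Injective.extension_property A M X Y f hf (N.subtype ∘ₗ g)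
    refine ⟨(N.linearProjOfIsCompl N' hc) ∘ₗ h, fun x => ?_⟩
    have h1 : h (f x) = (g x : M) := LinearMap.congr_fun hh x
    simp only [LinearMap.comp_apply, h1]
    exact Submodule.linearProjOfIsCompl_apply_left hc (g x)

lemma myInj.exists_prime_embedding {M : Type u} [AddCommGroup M] [Module A M]
    [IsNoetherianRing A] (hM : Nontrivial M) :
    ∃ (p : PrimeSpectrum A) (f : (A ⧸ p.asIdeal) →ₗ[A] M), Function.Injective f := by
  obtain ⟨P, hP⟩ := associatedPrimes.nonempty A M
  obtain ⟨hprime, x, hx⟩ := isAssociatedPrime_iff.mp hP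
  have hker : ∀ r : A, r • x = 0 ↔ r ∈ P := by
    intro r
    rw [hx, Submodule.mem_colon_singleton, Submodule.mem_bot]
  refine ⟨⟨P, hprime⟩, Submodule.liftQ P (LinearMap.toSpanSingleton A M x)
    (fun r hr => by simpa using (hker r).mpr hr), ?_⟩
  rw [← LinearMap.ker_eq_bot, Submodule.ker_liftQ_eq_bot]
  intro r hr
  exact (hker r).mp hr



-- nontriviality of E p
lemma myInj.nontrivE (p : PrimeSpectrum A) {Ep : Type u} [AddCommGroup Ep] [Module A Ep]
    (ι : (A ⧸ p.asIdeal) →ₗ[A] Ep) (hmono : Function.Injective ι) : Nontrivial Ep := by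
  refine ⟨ι (Submodule.Quotient.mk 1), 0, fun h => ?_⟩
  rw [← map_zero ι] at h
  have h1 : (Submodule.Quotient.mk (1:A) : A ⧸ p.asIdeal) = 0 := hmono h
  rw [Submodule.Quotient.mk_eq_zero] at h1
  exact p.isPrime.ne_top (Ideal.eq_top_of_isUnit_mem _ h1 isUnit_one)

-- the annihilator of any nonzero element of range ι p is p
lemma myInj.ann_of_mem_range (p : PrimeSpectrum A) {Ep : Type u} [AddCommGroup Ep] [Module A Ep]
    (ι : (A ⧸ p.asIdeal) →ₗ[A] Ep) (hmono : Function.Injective ι)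
    {z : Ep} (hz : z ∈ LinearMap.range ι) (hz0 : z ≠ 0) :
    ∀ r : A, r • z = 0 ↔ r ∈ p.asIdeal := by
  obtain ⟨c, rfl⟩ := hz
  obtain ⟨b, rfl⟩ := Submodule.Quotient.mk_surjective _ c
  have hb : b ∉ p.asIdeal := by
    intro hb
    exact hz0 (by rw [(Submodule.Quotient.mk_eq_zero _).mpr hb, map_zero])
  intro r
  rw [← map_smul, ← map_zero ι, hmono.eq_iff, ← Submodule.Quotient.mk_smul,
    Submodule.Quotient.mk_eq_zero, smul_eq_mul]
  exact ⟨fun h => ((p.isPrime.mem_or_mem h).resolve_right hb),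
    fun h => Ideal.mul_mem_right _ _ h⟩

-- indecomposability of E p
lemma myInj.indecE (p : PrimeSpectrum A) {Ep : Type u} [AddCommGroup Ep] [Module A Ep]
    (ι : (A ⧸ p.asIdeal) →ₗ[A] Ep) (hmono : Function.Injective ι)
    (hess : ∀ (W : Submodule A Ep), W ≠ ⊥ → LinearMap.range ι ⊓ W ≠ ⊥)
    (N N' : Submodule A Ep) (hc : IsCompl N N') : N = ⊥ ∨ N' = ⊥ := by
  by_contra hcon
  push_neg at hcon
  obtain ⟨hN, hN'⟩ := hcon
  obtain ⟨x, hxr, hxN, hx0⟩ : ∃ x, x ∈ LinearMap.range ι ∧ x ∈ N ∧ x ≠ 0 := by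
    obtain ⟨x, hx, hx0⟩ := Submodule.exists_mem_ne_zero_of_ne_bot (hess N hN)
    exact ⟨x, hx.1, hx.2, hx0⟩
  obtain ⟨y, hyr, hyN', hy0⟩ : ∃ y, y ∈ LinearMap.range ι ∧ y ∈ N' ∧ y ≠ 0 := by
    obtain ⟨y, hy, hy0⟩ := Submodule.exists_mem_ne_zero_of_ne_bot (hess N' hN')
    exact ⟨y, hy.1, hy.2, hy0⟩
  -- write x = ι (mk a), y = ι (mk b)
  obtain ⟨ca, rfl⟩ := hxr
  obtain ⟨cb, rfl⟩ := hyr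
  obtain ⟨a, rfl⟩ := Submodule.Quotient.mk_surjective _ ca
  obtain ⟨b, rfl⟩ := Submodule.Quotient.mk_surjective _ cb
  have ha : a ∉ p.asIdeal := fun h =>
    hx0 (by rw [(Submodule.Quotient.mk_eq_zero _).mpr h, map_zero])
  have hb : b ∉ p.asIdeal := fun h =>
    hy0 (by rw [(Submodule.Quotient.mk_eq_zero _).mpr h, map_zero])
  have key : b • ι (Submodule.Quotient.mk a) = a • ι (Submodule.Quotient.mk b) := by
    rw [← map_smul, ← map_smul, ← Submodule.Quotient.mk_smul, ← Submodule.Quotient.mk_smul,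
      smul_eq_mul, smul_eq_mul, mul_comm]
  have hmem : b • ι (Submodule.Quotient.mk a) ∈ N ⊓ N' := by
    refine ⟨N.smul_mem b hxN, ?_⟩
    rw [key]; exact N'.smul_mem a hyN'
  rw [hc.inf_eq_bot, Submodule.mem_bot] at hmem
  have : (b * a : A) ∈ p.asIdeal := by
    have := hmem
    rw [← map_smul, ← map_zero ι, hmono.eq_iff, ← Submodule.Quotient.mk_smul,
      Submodule.Quotient.mk_eq_zero, smul_eq_mul] at this
    exact this
  exact ((p.isPrime.mem_or_mem this).elim hb ha)




-- every nontrivial injective module contains a copy of some E p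
lemma myInj.exists_copy [IsNoetherianRing A]
    (E : PrimeSpectrum A → Type u) [∀ p, AddCommGroup (E p)] [∀ p, Module A (E p)]
    (ι : ∀ p : PrimeSpectrum A, (A ⧸ p.asIdeal) →ₗ[A] E p)
    (hmono : ∀ p, Function.Injective (ι p))
    (hess : ∀ p (W : Submodule A (E p)), W ≠ ⊥ → LinearMap.range (ι p) ⊓ W ≠ ⊥)
    {M : Type u} [AddCommGroup M] [Module A M]
    (hMinj : Module.Injective A M) (hnt : Nontrivial M) :
    ∃ (p : PrimeSpectrum A) (g : E p →ₗ[A] M), Function.Injective g := by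
  obtain ⟨p, f0, hf0⟩ := myInj.exists_prime_embedding (A := A) hnt
  haveI := hMinj
  obtain ⟨g, hg⟩ := Module.Injective.extension_property A M _ _ (ι p) (hmono p) f0
  refine ⟨p, g, ?_⟩
  rw [← LinearMap.ker_eq_bot]
  by_contra hker
  apply hess p _ hker
  rw [eq_bot_iff]
  rintro z ⟨⟨c, rfl⟩, (hzk : g (ι p c) = 0)⟩
  have : f0 c = 0 := by rw [← LinearMap.congr_fun hg c]; exact hzk
  have hc : c = 0 := by
    apply hf0; rw [this, map_zero]
  rw [hc, map_zero]; exact Submodule.mem_bot _ |>.mpr rfl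




lemma myInj.directSum [IsNoetherianRing A] {J : Type u} (F : J → Type u)
    [∀ j, AddCommGroup (F j)] [∀ j, Module A (F j)]
    (hF : ∀ j, Module.Injective A (F j)) :
    Module.Injective A (⨁ j, F j) := by
  classical
  apply Module.Baer.injective
  intro I g
  obtain ⟨s0, hs0⟩ := IsNoetherian.noetherian I
  subst hs0
  -- the finite set of coordinates involved
  set s : Finset J := s0.attach.biUnion
    (fun a => (g ⟨a.1, Submodule.subset_span a.2⟩).support) with hs
  have hsupp : ∀ x : Submodule.span A (s0 : Set A), ∀ j, j ∉ s → g x j = 0 := by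
    rintro ⟨x, hx⟩
    refine Submodule.span_induction (p := fun a ha => ∀ j, j ∉ s → g ⟨a, ha⟩ j = 0)
      ?_ ?_ ?_ ?_ hx
    · intro a ha j hj
      have : j ∉ (g ⟨a, Submodule.subset_span ha⟩).support := by
        intro hjs
        exact hj (Finset.mem_biUnion.mpr ⟨⟨a, ha⟩, Finset.mem_attach _ _, hjs⟩)
      exact DFinsupp.notMem_support_iff.mp this
    · intro j hj
      have : (⟨0, Submodule.zero_mem _⟩ : Submodule.span A (s0 : Set A)) = 0 := rfl
      rw [this, map_zero]; rfl
    · intro a b ha hb iha ihb j hj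
      have : (⟨a + b, Submodule.add_mem _ ha hb⟩ : Submodule.span A (s0 : Set A)) = ⟨a, ha⟩ + ⟨b, hb⟩ := rfl
      rw [this, map_add, DFinsupp.add_apply, iha j hj, ihb j hj, add_zero]
    · intro r a ha iha j hj
      have : (⟨r • a, Submodule.smul_mem _ r ha⟩ : Submodule.span A (s0 : Set A)) = r • ⟨a, ha⟩ := rfl
      rw [this, map_smul, DFinsupp.smul_apply, iha j hj, smul_zero]
  -- Baer extensions componentwise
  have hB : ∀ j, Module.Baer A (F j) := fun j => Module.Baer.of_injective (hF j)
  choose k hk using fun j => hB j (Submodule.span A (s0 : Set A)) ((DFinsupp.lapply j) ∘ₗ g)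
  set x0 : ⨁ j, F j := ∑ j ∈ s, DirectSum.of (fun j => F j) j (k j 1) with hx0
  refine ⟨LinearMap.toSpanSingleton A _ x0, fun r hr => ?_⟩
  have : LinearMap.toSpanSingleton A (⨁ j, F j) x0 r = r • x0 := rfl
  rw [this]
  refine DFinsupp.ext fun j => ?_
  rw [DFinsupp.smul_apply]
  by_cases hj : j ∈ s
  · have hxj : x0 j = k j 1 := by
      rw [hx0, DFinsupp.finset_sum_apply]
      rw [Finset.sum_eq_single_of_mem j hj (fun i _ hne => DirectSum.of_eq_of_ne _ _ _ hne.symm)]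
      exact DirectSum.of_eq_same _ _
    rw [hxj]
    have h1 : r • k j 1 = k j r := by rw [← map_smul, smul_eq_mul, mul_one]
    rw [h1, hk j r hr]
    rfl
  · have hxj : x0 j = 0 := by
      rw [hx0, DFinsupp.finset_sum_apply]
      exact Finset.sum_eq_zero fun i hi =>
        DirectSum.of_eq_of_ne _ _ _ (fun h => hj (h ▸ hi))
    rw [hxj, smul_zero, hsupp ⟨r, hr⟩ j hj]

end aux

/-- Matlis' classification of injective modules over a commutative noetherian ring `A`:
given, for each prime `𝔭`, an injective hull `E 𝔭` of `A/𝔭` (an injective module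
containing `A/𝔭` as an essential submodule), then:
* each `E 𝔭` is an indecomposable injective module;
* `E 𝔭 ≅ E 𝔮` implies `𝔭 = 𝔮` (so `𝔭 ↦ E 𝔭` is a bijection between `Spec A` and the
  isomorphism classes of indecomposable injective `A`-modules);
* every indecomposable injective `A`-module is isomorphic to some `E 𝔭`;
* every injective `A`-module is a direct sum of modules of the form `E 𝔭`. -/
theorem matlis_classification_of_injectives
    {A : Type u} [CommRing A] [IsNoetherianRing A]
    (E : PrimeSpectrum A → Type u) [∀ p, AddCommGroup (E p)] [∀ p, Module A (E p)]
    (hinj : ∀ p, Module.Injective A (E p))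
    (ι : ∀ p : PrimeSpectrum A, (A ⧸ p.asIdeal) →ₗ[A] E p)
    (hmono : ∀ p, Function.Injective (ι p))
    (hess : ∀ p (W : Submodule A (E p)), W ≠ ⊥ → LinearMap.range (ι p) ⊓ W ≠ ⊥) :
    (∀ p, Nontrivial (E p) ∧
      ∀ N N' : Submodule A (E p), IsCompl N N' → N = ⊥ ∨ N' = ⊥) ∧
    (∀ p q, Nonempty (E p ≃ₗ[A] E q) → p = q) ∧
    (∀ (M : Type u) [AddCommGroup M] [Module A M], Module.Injective A M →
      (Nontrivial M ∧ ∀ N N' : Submodule A M, IsCompl N N' → N = ⊥ ∨ N' = ⊥) →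
      ∃ p, Nonempty (M ≃ₗ[A] E p)) ∧
    (∀ (M : Type u) [AddCommGroup M] [Module A M], Module.Injective A M →
      ∃ (J : Type u) (f : J → PrimeSpectrum A), Nonempty (M ≃ₗ[A] ⨁ j : J, E (f j))) := by
  classical
  refine ⟨fun p => ⟨myInj.nontrivE p (ι p) (hmono p),
      myInj.indecE p (ι p) (hmono p) (hess p)⟩, ?_, ?_, ?_⟩
  · -- part 2 : E p ≃ E q → p = q
    rintro p q ⟨e⟩
    set V : Submodule A (E q) := Submodule.map e.toLinearMap (LinearMap.range (ι p)) with hV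
    have hne1 : (ι p) (Submodule.Quotient.mk 1) ≠ 0 := by
      intro h
      rw [← map_zero (ι p)] at h
      have h1 := (hmono p) h
      rw [Submodule.Quotient.mk_eq_zero] at h1
      exact p.isPrime.ne_top (Ideal.eq_top_of_isUnit_mem _ h1 isUnit_one)
    have hVne : V ≠ ⊥ := by
      intro h
      have hmem : e ((ι p) (Submodule.Quotient.mk 1)) ∈ V := ⟨_, ⟨_, rfl⟩, rfl⟩
      rw [h, Submodule.mem_bot] at hmem
      exact hne1 (by simpa using e.injective (by simpa using hmem))
    obtain ⟨z, ⟨hz1, hz2⟩, hz0⟩ := Submodule.exists_mem_ne_zero_of_ne_bot (hess q V hVne)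
    obtain ⟨y, hy, rfl⟩ := hz2
    have hy0 : y ≠ 0 := fun h => hz0 (by rw [h, map_zero])
    have hz1' : e y ∈ LinearMap.range (ι q) := by simpa using hz1
    have hz0' : e y ≠ 0 := by simpa using hz0
    have hannq := myInj.ann_of_mem_range q (ι q) (hmono q) hz1' hz0'
    have hannp := myInj.ann_of_mem_range p (ι p) (hmono p) hy hy0
    refine PrimeSpectrum.ext (Ideal.ext fun r => ?_)
    rw [← hannp r, ← hannq r]
    have hsm : r • (e y) = e (r • y) := (map_smul e r y).symm
    rw [hsm]
    exact ⟨fun h => by rw [h, map_zero], fun h => e.injective (by rw [h, map_zero])⟩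
  · -- part 3 : indecomposable injectives are of the form E p
    rintro M _ _ hMinj ⟨hMnt, hdec⟩
    obtain ⟨p, g, hg⟩ := myInj.exists_copy E ι hmono hess hMinj hMnt
    obtain ⟨N', hc⟩ := myInj.exists_isCompl_range (hinj p) g hg
    haveI := myInj.nontrivE p (ι p) (hmono p)
    have hrange_ne : LinearMap.range g ≠ ⊥ := by
      intro h
      rw [LinearMap.range_eq_bot] at h
      obtain ⟨x, y, hxy⟩ := ‹Nontrivial (E p)›
      exact hxy (hg (by rw [h]; rfl))
    have hN' : N' = ⊥ := (hdec _ _ hc).resolve_left hrange_ne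
    rw [hN'] at hc
    have htop : LinearMap.range g = ⊤ := codisjoint_bot.mp hc.codisjoint
    exact ⟨p, ⟨(LinearEquiv.ofBijective g ⟨hg, LinearMap.range_eq_top.mp htop⟩).symm⟩⟩
  · -- part 4 : every injective module is a direct sum of E p's
    intro M _ _ hMinj
    set 𝒞 : Set (Set (Submodule A M)) :=
      {T | sSupIndep T ∧ ∀ W ∈ T, W ≠ ⊥ ∧ ∃ p, Nonempty (W ≃ₗ[A] E p)} with h𝒞
    have hzorn : ∀ c ⊆ 𝒞, IsChain (· ⊆ ·) c → ∃ ub ∈ 𝒞, ∀ s ∈ c, s ⊆ ub := by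
      intro c hc hchain
      refine ⟨⋃₀ c, ⟨iSupIndep_sUnion_of_directed hchain.directedOn
        (fun a ha => (hc ha).1), ?_⟩, fun s hs => Set.subset_sUnion_of_mem hs⟩
      rintro W ⟨t, ht, hWt⟩
      exact (hc ht).2 W hWt
    obtain ⟨T, hTmax⟩ := zorn_subset 𝒞 hzorn
    obtain ⟨hTind, hTgood⟩ := hTmax.prop
    choose f hf using fun j : T => (hTgood j.1 j.2).2
    have eqv : ∀ j : T, (↥(j.1) ≃ₗ[A] E (f j)) := fun j => (hf j).some
    have hD : Module.Injective A (⨁ j : T, E (f j)) :=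
      myInj.directSum _ (fun j => hinj (f j))
    have hind : iSupIndep (fun j : T => j.1) := (sSupIndep_iff _).mp hTind
    set L : (⨁ j : T, ↥(j.1 : Submodule A M)) →ₗ[A] M :=
      DFinsupp.lsum ℕ (fun j : T => (j.1 : Submodule A M).subtype) with hL
    have hLinj : Function.Injective L :=
      (iSupIndep_iff_dfinsupp_lsum_injective _).mp hind
    set Ψ : (⨁ j : T, E (f j)) ≃ₗ[A] (⨁ j : T, ↥(j.1 : Submodule A M)) :=
      DFinsupp.mapRange.linearEquiv (fun j => (eqv j).symm) with hΨ
    set Φ : (⨁ j : T, E (f j)) →ₗ[A] M := L ∘ₗ Ψ.toLinearMap with hΦ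
    have hΦinj : Function.Injective Φ := hLinj.comp Ψ.injective
    have hΦrange : LinearMap.range Φ = sSup T := by
      rw [hΦ, LinearMap.range_comp_of_range_eq_top L Ψ.range, hL,
        ← Submodule.iSup_eq_range_dfinsupp_lsum, sSup_eq_iSup']
    obtain ⟨N', hc⟩ := myInj.exists_isCompl_range hD Φ hΦinj
    by_cases hN' : N' = ⊥
    · rw [hN'] at hc
      have htop : LinearMap.range Φ = ⊤ := codisjoint_bot.mp hc.codisjoint
      exact ⟨T, f, ⟨(LinearEquiv.ofBijective Φ ⟨hΦinj, LinearMap.range_eq_top.mp htop⟩).symm⟩⟩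
    · exfalso
      haveI hN'nt : Nontrivial N' := Submodule.nontrivial_iff_ne_bot.mpr hN'
      have hN'inj : Module.Injective A N' := myInj.of_isCompl hMinj N' _ hc.symm
      obtain ⟨p, w, hw⟩ := myInj.exists_copy E ι hmono hess hN'inj hN'nt
      set W : Submodule A M := LinearMap.range (N'.subtype ∘ₗ w) with hW
      have hWinj : Function.Injective (N'.subtype ∘ₗ w) := N'.injective_subtype.comp hw
      have hWle : W ≤ N' := by rintro x ⟨v, rfl⟩; exact (w v).2
      haveI := myInj.nontrivE p (ι p) (hmono p)
      have hWbot : W ≠ ⊥ := by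
        intro h
        rw [hW, LinearMap.range_eq_bot] at h
        obtain ⟨x, y, hxy⟩ := ‹Nontrivial (E p)›
        exact hxy (hWinj (by rw [h]; rfl))
      have hdisj : Disjoint W (sSup T) := by
        rw [← hΦrange]
        exact (hc.disjoint.symm).mono_left hWle
      have hWnotmem : W ∉ T := by
        intro h
        apply hWbot
        rw [eq_bot_iff]
        intro x hx
        rw [Submodule.mem_bot]
        exact Submodule.disjoint_def.mp hdisj x hx ((le_sSup h) hx)
      have hins : sSupIndep (insert W T) := by
        intro a ha
        rcases Set.mem_insert_iff.mp ha with rfl | haT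
        · rw [Set.insert_diff_self_of_notMem hWnotmem]
          exact hdisj
        · have haW : a ≠ W := fun h => hWnotmem (h ▸ haT)
          have hset : insert W T \ {a} = insert W (T \ {a}) := by
            rw [Set.insert_diff_of_notMem _ (by simpa using haW.symm)]
          rw [hset, sSup_insert]
          rw [Submodule.disjoint_def]
          intro x hxa hxWb
          obtain ⟨wz, hwz, y, hy, rfl⟩ := Submodule.mem_sup.mp hxWb
          have hwz0 : wz = 0 := by
            refine Submodule.disjoint_def.mp hdisj wz hwz ?_
            have h1 : wz + y ∈ sSup T := (le_sSup haT) hxa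
            have h2 : y ∈ sSup T := sSup_le_sSup (Set.diff_subset (s := T) (t := {a})) hy
            have : wz = (wz + y) - y := by abel
            rw [this]
            exact Submodule.sub_mem _ h1 h2
          have hxy : wz + y = y := by rw [hwz0, zero_add]
          rw [hxy] at hxa ⊢
          exact Submodule.disjoint_def.mp (hTind haT) y hxa hy
      have hmem𝒞 : insert W T ∈ 𝒞 := by
        refine ⟨hins, ?_⟩
        rintro W' hW'
        rcases Set.mem_insert_iff.mp hW' with rfl | hW'T
        · exact ⟨hWbot, p, ⟨(LinearEquiv.ofInjective _ hWinj).symm⟩⟩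
        · exact hTgood W' hW'T
      exact hWnotmem (hTmax.2 hmem𝒞 (Set.subset_insert W T) (Set.mem_insert W T))
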